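/- (Aitken / Gauss–Markov theorem, generalized) Let m = Jx + e with E[e]=0, Cov(e)=Ω positive definite, and J of rank p. For any linear unbiased estimator Am (i.e., AJ = Id_p), the covariance AΩA' satisfies AΩA' ≥ (J'Ω⁻¹J)⁻¹ in the Loewner order, i.e., AΩA' − (J'Ω⁻¹J)⁻¹ is positive semidefinite. Hence the GLS estimator is BLUE. -/

import Mathlib

open Matrix ComplexOrder

/-- Aitken / generalized Gauss–Markov theorem: for any linear unbiased estimator
`A m` (i.e. `A J = 1`), the covariance `A Ω Aᴴ` dominates `(Jᴴ Ω⁻¹ J)⁻¹` in the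
Loewner order, i.e. their difference is positive semidefinite. -/
theorem stmt_5 {N p : ℕ} (J : Matrix (Fin N) (Fin p) ℂ)
    (Om : Matrix (Fin N) (Fin N) ℂ) (hJ : J.rank = p) (hOm : Om.PosDef)
    (A : Matrix (Fin p) (Fin N) ℂ) (hA : A * J = 1) :
    (A * Om * Aᴴ - (Jᴴ * Om⁻¹ * J)⁻¹).PosSemidef := by
  have hOminv : (Om⁻¹).PosDef := hOm.inv
  set B : Matrix (Fin p) (Fin p) ℂ := Jᴴ * Om⁻¹ * J with hB
  -- B is positive definite, since J is injective (from A * J = 1)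
  have hBpd : B.PosDef := by
    refine PosDef.of_dotProduct_mulVec_pos (isHermitian_conjTranspose_mul_mul J hOminv.isHermitian) fun x hx => ?_
    have hJx : J *ᵥ x ≠ 0 := by
      intro h
      apply hx
      have hx' : A *ᵥ (J *ᵥ x) = x := by
        rw [mulVec_mulVec, hA, one_mulVec]
      rw [h, mulVec_zero] at hx'
      exact hx'.symm
    have := hOminv.dotProduct_mulVec_pos hJx
    simpa only [hB, star_mulVec, dotProduct_mulVec, vecMul_vecMul] using this
  have hOmInvOm : Om⁻¹ * Om = 1 :=
    nonsing_inv_mul Om ((isUnit_iff_isUnit_det Om).mp hOm.isUnit)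
  have hBinvB : B⁻¹ * B = 1 :=
    nonsing_inv_mul B ((isUnit_iff_isUnit_det B).mp hBpd.isUnit)
  have hBinvH : B⁻¹ᴴ = B⁻¹ := hBpd.inv.isHermitian
  -- the GLS estimator
  set G : Matrix (Fin p) (Fin N) ℂ := B⁻¹ * Jᴴ * Om⁻¹ with hG
  have hGOm : G * Om = B⁻¹ * Jᴴ := by
    rw [hG, Matrix.mul_assoc, hOmInvOm, Matrix.mul_one]
  have hJA : Jᴴ * Aᴴ = 1 := by
    rw [← conjTranspose_mul, hA, conjTranspose_one]
  have hGJ : G * J = 1 := by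
    rw [hG, Matrix.mul_assoc, Matrix.mul_assoc, ← Matrix.mul_assoc Jᴴ, ← hB, hBinvB]
  have hJG : Jᴴ * Gᴴ = 1 := by
    rw [← conjTranspose_mul, hGJ, conjTranspose_one]
  have hGOmA : G * Om * Aᴴ = B⁻¹ := by
    rw [hGOm, Matrix.mul_assoc, hJA, Matrix.mul_one]
  have hGOmG : G * Om * Gᴴ = B⁻¹ := by
    rw [hGOm, Matrix.mul_assoc, hJG, Matrix.mul_one]
  have hAOmG : A * Om * Gᴴ = B⁻¹ := by
    have h := congrArg conjTranspose hGOmA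
    rw [conjTranspose_mul, conjTranspose_mul, conjTranspose_conjTranspose,
      hOm.isHermitian.eq, hBinvH] at h
    rw [← h, Matrix.mul_assoc]
  have key : A * Om * Aᴴ - B⁻¹ = (A - G) * Om * (A - G)ᴴ := by
    rw [conjTranspose_sub, Matrix.sub_mul, Matrix.sub_mul, Matrix.mul_sub, Matrix.mul_sub, hGOmA, hGOmG, hAOmG]
    abel
  rw [key]
  exact hOm.posSemidef.mul_mul_conjTranspose_same (A - G)
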